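/- The fundamental system of neighbourhoods {V^M_k(a)}_{k∈ℕ} on the combinatorial M-Morse boundary of a free product satisfies the filter axioms: (1) a ∈ V^M_k(a) for all k; (2) for all i,j there is k with V^M_k(a) ⊂ V^M_i(a) ∩ V^M_j(a); (3) for every i there is j such that for every b ∈ V^M_j(a) there exists k with V^M_k(b) ⊂ V^M_i(a). -/

import Mathlib

open Set

/-- A Morse gauge. -/
abbrev MorseGauge := ℝ → ℝ → ℝ

/-- The constant `δ_M` associated to a Morse gauge `M`. -/
noncomputable def deltaM (M : MorseGauge) : ℝ :=
  max (4 * M 1 (2 * M 5 0) + 2 * M 5 0) (8 * M 3 0)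

/-- A list of letters from `S ∪ S⁻¹`. -/
def IsWordOver {G : Type*} [Group G] (S : Set G) (l : List G) : Prop :=
  ∀ x ∈ l, x ∈ S ∨ x⁻¹ ∈ S

/-- The word metric on `G` associated to the generating set `S`. -/
noncomputable def wordDist {G : Type*} [Group G] (S : Set G) (x y : G) : ℝ :=
  sInf {r : ℝ | ∃ l : List G, IsWordOver S l ∧ l.prod = x⁻¹ * y ∧ r = l.length}

section NatPaths

variable {G : Type*}

/-- A discrete `(L,e)`-quasi-geodesic (with respect to the distance function `d`),
parametrised over a set of naturals. -/
def IsQGOnN (d : G → G → ℝ) (L e : ℝ) (γ : ℕ → G) (s : Set ℕ) : Prop :=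
  ∀ i ∈ s, ∀ j ∈ s,
    (1 / L) * |(i : ℝ) - (j : ℝ)| - e ≤ d (γ i) (γ j) ∧
      d (γ i) (γ j) ≤ L * |(i : ℝ) - (j : ℝ)| + e

/-- A discrete geodesic with respect to `d`. -/
def IsGeodesicOnN (d : G → G → ℝ) (γ : ℕ → G) (s : Set ℕ) : Prop :=
  ∀ i ∈ s, ∀ j ∈ s, d (γ i) (γ j) = |(i : ℝ) - (j : ℝ)|

/-- The (discrete) path `γ` on `s` is `M`-Morse with respect to `d`. -/
def IsMorseOnN (d : G → G → ℝ) (M : MorseGauge) (γ : ℕ → G) (s : Set ℕ) : Prop :=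
  ∀ L e, 1 ≤ L → 0 ≤ e → ∀ (η : ℕ → G) (a b : ℕ), a ≤ b →
    IsQGOnN d L e η (Icc a b) → η a ∈ γ '' s → η b ∈ γ '' s →
    ∀ i ∈ Icc a b, ∃ j ∈ s, d (η i) (γ j) ≤ M L e

/-- A Morse geodesic ray from the basepoint `o`. -/
def IsMorseRayN (d : G → G → ℝ) (o : G) (γ : ℕ → G) : Prop :=
  γ 0 = o ∧ IsGeodesicOnN d γ univ ∧ ∃ M, IsMorseOnN d M γ univ

/-- The type of Morse geodesic rays from `o`. -/
def MRayN (d : G → G → ℝ) (o : G) := {γ : ℕ → G // IsMorseRayN d o γ}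

/-- The Morse boundary: Morse rays from `o` up to bounded (Hausdorff) distance. -/
def MorseBoundaryN (d : G → G → ℝ) (o : G) :=
  Quot (fun γ γ' : MRayN d o => ∃ C, ∀ i, d (γ.1 i) (γ'.1 i) ≤ C)

/-- `z` is an `M`-Morse direction: it admits an `M`-Morse realization. -/
def MorseDirN (d : G → G → ℝ) (o : G) (M : MorseGauge) (z : MorseBoundaryN d o) : Prop :=
  ∃ γ : MRayN d o, IsMorseOnN d M γ.1 univ ∧ Quot.mk _ γ = z

/-- The `M`-Morse stratum `∂^M` of the Morse boundary. -/
def stratumN (d : G → G → ℝ) (o : G) (M : MorseGauge) : Set (MorseBoundaryN d o) :=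
  {z | MorseDirN d o M z}

/-- The neighbourhood `U_{M,n}(z)` in the `M`-Morse stratum: classes of `M`-Morse rays
that `δ_M`-fellow-travel every `M`-Morse realization of `z` up to time `n`. -/
def UN (d : G → G → ℝ) (o : G) (M : MorseGauge) (n : ℕ) (z : MorseBoundaryN d o) :
    Set (MorseBoundaryN d o) :=
  {w | ∃ η : MRayN d o, Quot.mk _ η = w ∧ IsMorseOnN d M η.1 univ ∧
        ∀ ξ : MRayN d o, IsMorseOnN d M ξ.1 univ → Quot.mk _ ξ = z →
          ∀ t ≤ n, d (η.1 t) (ξ.1 t) < deltaM M}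

/-- The direct-limit topology on the Morse boundary: a set is open iff its intersection
with every stratum is open for the neighbourhood-basis topology of that stratum. -/
def morseTopologyN (d : G → G → ℝ) (o : G) : TopologicalSpace (MorseBoundaryN d o) where
  IsOpen O := ∀ M z, z ∈ O → MorseDirN d o M z → ∃ n, UN d o M n z ∩ stratumN d o M ⊆ O
  isOpen_univ := by intro M z _ _; exact ⟨0, fun w _ => trivial⟩
  isOpen_inter := by
    intro O₁ O₂ h₁ h₂ M z hz hM
    obtain ⟨n₁, hn₁⟩ := h₁ M z hz.1 hM
    obtain ⟨n₂, hn₂⟩ := h₂ M z hz.2 hM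
    refine ⟨max n₁ n₂, fun w hw => ⟨hn₁ ⟨?_, hw.2⟩, hn₂ ⟨?_, hw.2⟩⟩⟩
    · obtain ⟨η, h1, h2, h3⟩ := hw.1
      exact ⟨η, h1, h2, fun ξ a b t ht => h3 ξ a b t (ht.trans (le_max_left _ _))⟩
    · obtain ⟨η, h1, h2, h3⟩ := hw.1
      exact ⟨η, h1, h2, fun ξ a b t ht => h3 ξ a b t (ht.trans (le_max_right _ _))⟩
  isOpen_sUnion := by
    intro S hS M z hz hM
    obtain ⟨O, hO, hzO⟩ := hz
    obtain ⟨n, hn⟩ := hS O hO M z hzO hM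
    exact ⟨n, fun w hw => ⟨O, hO, hn hw⟩⟩

/-- `x ∈ G` is an `M`-Morse point: some geodesic from `o` to `x` is `M`-Morse. -/
def MorsePtN (d : G → G → ℝ) (o : G) (M : MorseGauge) (x : G) : Prop :=
  ∃ (n : ℕ) (γ : ℕ → G), γ 0 = o ∧ γ n = x ∧
    IsGeodesicOnN d γ (Iic n) ∧ IsMorseOnN d M γ (Iic n)

/-- Membership of the point `x` in the filled neighbourhood `Û_{M,k}(z)`. -/
def InFilledPtN (d : G → G → ℝ) (o : G) (M : MorseGauge) (k : ℕ)
    (z : MorseBoundaryN d o) (x : G) : Prop :=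
  ∃ (n : ℕ) (γ : ℕ → G), k ≤ n ∧ γ 0 = o ∧ γ n = x ∧
    IsGeodesicOnN d γ (Iic n) ∧ IsMorseOnN d M γ (Iic n) ∧
    ∀ ξ : MRayN d o, IsMorseOnN d M ξ.1 univ → Quot.mk _ ξ = z →
      ∀ t ≤ k, d (γ t) (ξ.1 t) < deltaM M

end NatPaths
open Monoid

section FreeProduct

variable {A B : Type*} [Group A] [Group B]

/-- A syllable viewed inside the free product `A ∗ B`. -/
def sylElem : A ⊕ B → Monoid.Coprod A B
  | Sum.inl a => Monoid.Coprod.inl a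
  | Sum.inr b => Monoid.Coprod.inr b

/-- The generating set of `A ∗ B` induced by `S_A` and `S_B`. -/
def fpGens (SA : Set A) (SB : Set B) : Set (Monoid.Coprod A B) :=
  (fun a : A => (Monoid.Coprod.inl a : Monoid.Coprod A B)) '' SA ∪
    (fun b : B => (Monoid.Coprod.inr b : Monoid.Coprod A B)) '' SB

/-- A syllable is a Morse point of its factor. -/
def MorsePtSum (dA : A → A → ℝ) (dB : B → B → ℝ) (M : MorseGauge) : A ⊕ B → Prop
  | Sum.inl a => MorsePtN dA 1 M a
  | Sum.inr b => MorsePtN dB 1 M b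

/-- A Morse direction of one of the two factors is `M`-Morse. -/
def MorseDirSum (dA : A → A → ℝ) (dB : B → B → ℝ) (M : MorseGauge) :
    MorseBoundaryN dA (1 : A) ⊕ MorseBoundaryN dB (1 : B) → Prop
  | Sum.inl z => MorseDirN dA 1 M z
  | Sum.inr z => MorseDirN dB 1 M z

/-- Conditions on an infinite syllable sequence: starts in `A`, alternates, and all
syllables except possibly the first are nontrivial. -/
def SylSeqOK (u : ℕ → A ⊕ B) : Prop :=
  (u 0).isLeft = true ∧ (∀ i, (u i).isLeft ≠ (u (i + 1)).isLeft) ∧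
    ∀ i, 1 ≤ i → u i ≠ Sum.inl (1 : A) ∧ u i ≠ Sum.inr (1 : B)

/-- Conditions on a finite syllable list: starts in `A`, alternates, and all syllables
except possibly the first are nontrivial. -/
def SylListOK (l : List (A ⊕ B)) : Prop :=
  (∀ x ∈ l.head?, x.isLeft = true) ∧ l.Chain' (fun x y => x.isLeft ≠ y.isLeft) ∧
    ∀ x ∈ l.tail, x ≠ Sum.inl (1 : A) ∧ x ≠ Sum.inr (1 : B)

/-- A combinatorial Morse geodesic of infinite type. -/
structure CombInf (dA : A → A → ℝ) (dB : B → B → ℝ) : Type _ where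
  u : ℕ → A ⊕ B
  ok : SylSeqOK u
  morse : ∃ M : MorseGauge, ∀ i, MorsePtSum dA dB M (u i)

/-- A combinatorial Morse geodesic of finite type. -/
structure CombFin (dA : A → A → ℝ) (dB : B → B → ℝ) : Type _ where
  l : List (A ⊕ B)
  z : MorseBoundaryN dA (1 : A) ⊕ MorseBoundaryN dB (1 : B)
  ok : SylListOK l
  parity : Even l.length ↔ z.isLeft = true
  morse : ∃ M : MorseGauge, (∀ x ∈ l, MorsePtSum dA dB M x) ∧ MorseDirSum dA dB M z

/-- The combinatorial Morse boundary of the free product. -/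
def CombBoundary (dA : A → A → ℝ) (dB : B → B → ℝ) : Type _ :=
  CombInf dA dB ⊕ CombFin dA dB

/-- The prefix product `v_i` of the first `i` syllables of an infinite sequence. -/
def sylProd (u : ℕ → A ⊕ B) (i : ℕ) : Monoid.Coprod A B :=
  ((List.range i).map (fun j => sylElem (u j))).prod

/-- The prefix product of the first `i` syllables of a finite list. -/
def sylProdL (l : List (A ⊕ B)) (i : ℕ) : Monoid.Coprod A B :=
  ((l.take i).map sylElem).prod

end FreeProduct

section Statement14

variable {A B : Type*} [Group A] [Group B]

/-- A combinatorial `M`-Morse geodesic of infinite type. -/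
structure CombInfM (dA : A → A → ℝ) (dB : B → B → ℝ) (M : MorseGauge) : Type _ where
  u : ℕ → A ⊕ B
  ok : SylSeqOK u
  morse : ∀ i, MorsePtSum dA dB M (u i)

/-- A combinatorial `M`-Morse geodesic of finite type. -/
structure CombFinM (dA : A → A → ℝ) (dB : B → B → ℝ) (M : MorseGauge) : Type _ where
  l : List (A ⊕ B)
  z : MorseBoundaryN dA (1 : A) ⊕ MorseBoundaryN dB (1 : B)
  ok : SylListOK l
  parity : Even l.length ↔ z.isLeft = true
  morse : (∀ x ∈ l, MorsePtSum dA dB M x) ∧ MorseDirSum dA dB M z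

/-- The combinatorial `M`-Morse boundary. -/
def CombBoundaryM (dA : A → A → ℝ) (dB : B → B → ℝ) (M : MorseGauge) : Type _ :=
  CombInfM dA dB M ⊕ CombFinM dA dB M

/-- The length `l(a)` of a combinatorial Morse geodesic. -/
def lenOf {dA : A → A → ℝ} {dB : B → B → ℝ} {M : MorseGauge} :
    CombBoundaryM dA dB M → ℕ∞
  | Sum.inl _ => ⊤
  | Sum.inr c => (c.l.length : ℕ∞)

/-- The `i`-th syllable `u_{i+1}(a)` of a combinatorial Morse geodesic (0-indexed). -/
def sylOf {dA : A → A → ℝ} {dB : B → B → ℝ} {M : MorseGauge} :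
    CombBoundaryM dA dB M → ℕ → Option (A ⊕ B)
  | Sum.inl c, i => some (c.u i)
  | Sum.inr c, i => c.l[i]?

/-- The Morse direction `γ(a)` of a finite-type combinatorial Morse geodesic. -/
def dirOf {dA : A → A → ℝ} {dB : B → B → ℝ} {M : MorseGauge} :
    CombBoundaryM dA dB M →
      Option (MorseBoundaryN dA (1 : A) ⊕ MorseBoundaryN dB (1 : B))
  | Sum.inl _ => none
  | Sum.inr c => some c.z

/-- Membership in the neighbourhood `U_{M,k}` for directions of the factors. -/
def USumMem (dA : A → A → ℝ) (dB : B → B → ℝ) (M : MorseGauge) (k : ℕ) :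
    MorseBoundaryN dA (1 : A) ⊕ MorseBoundaryN dB (1 : B) →
      MorseBoundaryN dA (1 : A) ⊕ MorseBoundaryN dB (1 : B) → Prop
  | Sum.inl z, Sum.inl w => w ∈ UN dA 1 M k z
  | Sum.inr z, Sum.inr w => w ∈ UN dB 1 M k z
  | _, _ => False

/-- Membership of a syllable in the filled neighbourhood `Û_{M,k}` of a direction of one
of the factors. -/
def InFilledSum (dA : A → A → ℝ) (dB : B → B → ℝ) (M : MorseGauge) (k : ℕ) :
    MorseBoundaryN dA (1 : A) ⊕ MorseBoundaryN dB (1 : B) → A ⊕ B → Prop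
  | Sum.inl z, Sum.inl x => InFilledPtN dA 1 M k z x
  | Sum.inr z, Sum.inr x => InFilledPtN dB 1 M k z x
  | _, _ => False

/-- The fundamental neighbourhood `V^M_k(a)` in the combinatorial `M`-Morse boundary. -/
def VM {dA : A → A → ℝ} {dB : B → B → ℝ} {M : MorseGauge} (k : ℕ)
    (a : CombBoundaryM dA dB M) : Set (CombBoundaryM dA dB M) :=
  match a with
  | Sum.inl c =>
      {b | (k : ℕ∞) ≤ lenOf b ∧ ∀ i < k, sylOf b i = some (c.u i)}
  | Sum.inr c =>
      {b | (c.l.length : ℕ∞) ≤ lenOf b ∧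
        (∀ i < c.l.length, sylOf b i = c.l[i]?) ∧
        ((c.l.length : ℕ∞) < lenOf b →
          ∃ x, sylOf b c.l.length = some x ∧ InFilledSum dA dB M k c.z x) ∧
        (lenOf b = (c.l.length : ℕ∞) →
          ∃ zb, dirOf b = some zb ∧ USumMem dA dB M k c.z zb)}

namespace Stmt14Aux

section WordMetric

variable {G : Type*} [Group G] (S : Set G)

/-- The set of lengths of words representing `x⁻¹ * y`. -/
def wSet (x y : G) : Set ℕ :=
  {n | ∃ l : List G, IsWordOver S l ∧ l.prod = x⁻¹ * y ∧ l.length = n}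

/-- The natural-number word distance. -/
noncomputable def nd (x y : G) : ℕ := sInf (wSet S x y)

variable {S}

lemma isWordOver_nil : IsWordOver S ([] : List G) := by
  intro x hx; simp at hx

lemma wSet_nonempty (hgen : Subgroup.closure S = ⊤) (x y : G) :
    (wSet S x y).Nonempty := by
  have hx : x⁻¹ * y ∈ Subgroup.closure S := by rw [hgen]; trivial
  have main : ∀ g : G, g ∈ Subgroup.closure S → ∃ l : List G, IsWordOver S l ∧ l.prod = g := by
    intro g hg
    induction hg using Subgroup.closure_induction with
    | mem g hg =>
        refine ⟨[g], ?_, by simp⟩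
        intro a ha
        simp only [List.mem_singleton] at ha
        subst ha
        exact Or.inl hg
    | one => exact ⟨[], isWordOver_nil, by simp⟩
    | mul g h _ _ hg hh =>
        obtain ⟨l1, hl1, hp1⟩ := hg
        obtain ⟨l2, hl2, hp2⟩ := hh
        refine ⟨l1 ++ l2, ?_, by simp [hp1, hp2]⟩
        intro a ha
        rcases List.mem_append.mp ha with h | h
        exacts [hl1 a h, hl2 a h]
    | inv g _ hg =>
        obtain ⟨l, hl, hp⟩ := hg
        refine ⟨(l.map fun a => a⁻¹).reverse, ?_, ?_⟩
        · intro a ha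
          rw [List.mem_reverse, List.mem_map] at ha
          obtain ⟨b, hb, rfl⟩ := ha
          rcases hl b hb with h | h
          · exact Or.inr (by simpa using h)
          · exact Or.inl h
        · rw [← List.prod_inv_reverse, hp]
  obtain ⟨l, hl, hp⟩ := main _ hx
  exact ⟨l.length, l, hl, hp, rfl⟩

lemma nd_le {x y : G} {l : List G} (hl : IsWordOver S l) (hp : l.prod = x⁻¹ * y) :
    nd S x y ≤ l.length :=
  Nat.sInf_le ⟨l, hl, hp, rfl⟩

lemma exists_min_word (hgen : Subgroup.closure S = ⊤) (x y : G) :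
    ∃ l : List G, IsWordOver S l ∧ l.prod = x⁻¹ * y ∧ l.length = nd S x y :=
  Nat.sInf_mem (wSet_nonempty hgen x y)

lemma wordDist_eq_nd (hgen : Subgroup.closure S = ⊤) (x y : G) :
    wordDist S x y = (nd S x y : ℝ) := by
  have himg : {r : ℝ | ∃ l : List G, IsWordOver S l ∧ l.prod = x⁻¹ * y ∧ r = l.length} =
      (fun n : ℕ => (n : ℝ)) '' wSet S x y := by
    ext r
    constructor
    · rintro ⟨l, h1, h2, rfl⟩; exact ⟨l.length, ⟨l, h1, h2, rfl⟩, rfl⟩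
    · rintro ⟨n, ⟨l, h1, h2, h3⟩, rfl⟩; exact ⟨l, h1, h2, by rw [h3]⟩
  rw [wordDist, himg]
  apply le_antisymm
  · exact csInf_le ⟨0, by rintro r ⟨n, _, rfl⟩; positivity⟩
      ⟨nd S x y, Nat.sInf_mem (wSet_nonempty hgen x y), rfl⟩
  · refine le_csInf ((wSet_nonempty hgen x y).image _) ?_
    rintro r ⟨n, hn, rfl⟩
    have := Nat.sInf_le hn
    show (nd S x y : ℝ) ≤ (n : ℝ)
    exact_mod_cast this

lemma nd_self (x : G) : nd S x x = 0 :=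
  Nat.le_zero.mp (by simpa using nd_le isWordOver_nil (by simp))

lemma nd_symm (hgen : Subgroup.closure S = ⊤) (x y : G) : nd S x y = nd S y x := by
  have key : ∀ u v : G, nd S u v ≤ nd S v u := by
    intro u v
    obtain ⟨l, hl, hp, hlen⟩ := exists_min_word hgen v u
    have hw : IsWordOver S (l.map fun a => a⁻¹).reverse := by
      intro a ha
      rw [List.mem_reverse, List.mem_map] at ha
      obtain ⟨b, hb, rfl⟩ := ha
      rcases hl b hb with h | h
      · exact Or.inr (by simpa using h)
      · exact Or.inl h
    have hprod : ((l.map fun a => a⁻¹).reverse).prod = u⁻¹ * v := by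
      rw [← List.prod_inv_reverse, hp]; group
    calc nd S u v ≤ _ := nd_le hw hprod
      _ = nd S v u := by rw [List.length_reverse, List.length_map, hlen]
  exact le_antisymm (key x y) (key y x)

lemma nd_triangle (hgen : Subgroup.closure S = ⊤) (x y z : G) :
    nd S x z ≤ nd S x y + nd S y z := by
  obtain ⟨l1, hl1, hp1, hlen1⟩ := exists_min_word hgen x y
  obtain ⟨l2, hl2, hp2, hlen2⟩ := exists_min_word hgen y z
  have hw : IsWordOver S (l1 ++ l2) := by
    intro a ha; rcases List.mem_append.mp ha with h | h
    exacts [hl1 a h, hl2 a h]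
  have hp : (l1 ++ l2).prod = x⁻¹ * z := by
    rw [List.prod_append, hp1, hp2]; group
  calc nd S x z ≤ (l1 ++ l2).length := nd_le hw hp
    _ = _ := by rw [List.length_append, hlen1, hlen2]

lemma eq_of_nd_eq_zero (hgen : Subgroup.closure S = ⊤) {x y : G}
    (h : nd S x y = 0) : x = y := by
  obtain ⟨l, _, hp, hlen⟩ := exists_min_word hgen x y
  rw [h, List.length_eq_zero_iff] at hlen
  subst hlen
  simp only [List.prod_nil] at hp
  have := hp.symm
  rw [← eq_inv_mul_iff_mul_eq] at this
  · simpa using (inv_mul_eq_one.mp hp.symm)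

lemma nd_mul_left (g x y : G) : nd S (g * x) (g * y) = nd S x y := by
  have : wSet S (g * x) (g * y) = wSet S x y := by
    unfold wSet
    simp [mul_inv_rev, mul_assoc]
  unfold nd; rw [this]

section RealDist

variable (hgen : Subgroup.closure S = ⊤)
include hgen

lemma dW_nonneg (x y : G) : 0 ≤ wordDist S x y := by
  rw [wordDist_eq_nd hgen]; positivity

lemma dW_self (x : G) : wordDist S x x = 0 := by
  rw [wordDist_eq_nd hgen, nd_self]; simp

lemma dW_symm (x y : G) : wordDist S x y = wordDist S y x := by
  rw [wordDist_eq_nd hgen, wordDist_eq_nd hgen, nd_symm hgen]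

lemma dW_triangle (x y z : G) : wordDist S x z ≤ wordDist S x y + wordDist S y z := by
  rw [wordDist_eq_nd hgen, wordDist_eq_nd hgen, wordDist_eq_nd hgen]
  exact_mod_cast nd_triangle hgen x y z

lemma dW_one_le_of_ne {x y : G} (h : x ≠ y) : 1 ≤ wordDist S x y := by
  rw [wordDist_eq_nd hgen]
  have : nd S x y ≠ 0 := fun h0 => h (eq_of_nd_eq_zero hgen h0)
  exact_mod_cast Nat.one_le_iff_ne_zero.mpr this

/-- A discrete geodesic between two points in the word metric. -/
lemma exists_geodesic_path (x y : G) :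
    ∃ p : ℕ → G, p 0 = x ∧ p (nd S x y) = y ∧
      ∀ i, i ≤ nd S x y → ∀ j, j ≤ nd S x y → i ≤ j → nd S (p i) (p j) = j - i := by
  obtain ⟨l, hl, hp, hlen⟩ := exists_min_word hgen x y
  set n := nd S x y with hn
  refine ⟨fun i => x * (l.take i).prod, by simp, ?_, ?_⟩
  · show x * (l.take n).prod = y
    have : l.take n = l := List.take_of_length_le (by omega)
    rw [this, hp]; group
  · intro i hi j hj hij
    have hword : ∀ i j : ℕ, i ≤ j → j ≤ n →
        nd S (x * (l.take i).prod) (x * (l.take j).prod) ≤ j - i := by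
      intro i j hij hj
      rw [nd_mul_left]
      have hsplit : l.take j = l.take i ++ (l.drop i).take (j - i) := by
        rw [← List.take_add]
        congr 1
        omega
      have hw : IsWordOver S ((l.drop i).take (j - i)) := by
        intro a ha
        exact hl a (((l.drop i).take_sublist _).subset ha |> (l.drop_sublist i).subset)
      have hprod : ((l.drop i).take (j - i)).prod
          = ((l.take i).prod)⁻¹ * (l.take j).prod := by
        rw [hsplit, List.prod_append]; group
      calc nd S (l.take i).prod (l.take j).prod ≤ ((l.drop i).take (j - i)).length := by
            refine nd_le hw ?_
            rw [hprod]
        _ ≤ j - i := by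
            rw [List.length_take, List.length_drop]
            omega
    refine le_antisymm (hword i j hij hj) ?_
    -- lower bound via splicing
    have h1 : nd S x (x * (l.take i).prod) ≤ i := by
      have := hword 0 i (Nat.zero_le _) (le_trans hij hj)
      simpa using this
    have h2 : nd S (x * (l.take j).prod) y ≤ n - j := by
      have hjn : l.take j ++ l.drop j = l := List.take_append_drop j l
      have hw : IsWordOver S (l.drop j) := fun a ha => hl a ((l.drop_sublist j).subset ha)
      have hprod : (l.drop j).prod = (x * (l.take j).prod)⁻¹ * y := by
        have : (l.take j).prod * (l.drop j).prod = x⁻¹ * y := by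
          rw [← List.prod_append, hjn, hp]
        rw [mul_inv_rev, mul_assoc, ← this]
        group
      calc nd S (x * (l.take j).prod) y ≤ (l.drop j).length := nd_le hw hprod
        _ = l.length - j := List.length_drop
        _ = n - j := by rw [hlen]
    show j - i ≤ nd S (x * (l.take i).prod) (x * (l.take j).prod)
    have h3 : n ≤ i + nd S (x * (l.take i).prod) (x * (l.take j).prod) + (n - j) := by
      calc n = nd S x y := rfl
        _ ≤ nd S x (x * (l.take i).prod) + nd S (x * (l.take i).prod) y :=
            nd_triangle hgen _ _ _
        _ ≤ nd S x (x * (l.take i).prod) +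
            (nd S (x * (l.take i).prod) (x * (l.take j).prod) +
              nd S (x * (l.take j).prod) y) := by
            have := nd_triangle hgen (x * (l.take i).prod) (x * (l.take j).prod) y
            omega
        _ ≤ _ := by omega
    omega

/-- Geodesic path, packaged with the real-valued distance. -/
lemma exists_geodesic_pathR (x y : G) :
    ∃ p : ℕ → G, p 0 = x ∧ p (nd S x y) = y ∧
      IsGeodesicOnN (wordDist S) p (Iic (nd S x y)) := by
  obtain ⟨p, h0, hend, hgeo⟩ := exists_geodesic_path hgen x y
  refine ⟨p, h0, hend, ?_⟩
  intro i hi j hj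
  simp only [mem_Iic] at hi hj
  rcases le_total i j with hij | hij
  · rw [wordDist_eq_nd hgen, hgeo i hi j hj hij, Nat.cast_sub hij, abs_sub_comm,
      abs_of_nonneg (sub_nonneg.mpr (Nat.cast_le.mpr hij))]
  · rw [wordDist_eq_nd hgen, nd_symm hgen, hgeo j hj i hi hij, Nat.cast_sub hij,
      abs_of_nonneg (sub_nonneg.mpr (Nat.cast_le.mpr hij))]

end RealDist

end WordMetric

end Stmt14Aux
namespace Stmt14Aux

section Gauge

variable {G : Type*} [Group G] {S : Set G} (hgen : Subgroup.closure S = ⊤)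
include hgen

lemma nd_one_ray {ξ : ℕ → G} (hξ0 : ξ 0 = 1)
    (hξg : IsGeodesicOnN (wordDist S) ξ univ) (j : ℕ) : nd S 1 (ξ j) = j := by
  have h := hξg 0 trivial j trivial
  rw [hξ0, wordDist_eq_nd hgen] at h
  have h2 : ((nd S 1 (ξ j) : ℝ)) = (j : ℝ) := by
    rw [h]
    push_cast
    rw [zero_sub, abs_neg, abs_of_nonneg (Nat.cast_nonneg j)]
  exact_mod_cast h2

lemma nd_inv_le_one {g : G} (hg : nd S 1 g = 1) : nd S 1 g⁻¹ ≤ 1 := by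
  obtain ⟨l, hl, hp, hlen⟩ := exists_min_word hgen 1 g
  rw [hg] at hlen
  obtain ⟨w, rfl⟩ := List.length_eq_one_iff.mp hlen
  have hw : w = g := by simpa using hp
  have hword : IsWordOver S [w⁻¹] := by
    intro a ha
    simp only [List.mem_singleton] at ha
    subst ha
    rcases hl w (by simp) with h | h
    · exact Or.inr (by simpa using h)
    · exact Or.inl h
  have := nd_le (x := (1:G)) (y := g⁻¹) hword (by simp [hw])
  simpa using this

lemma gauge_ge_one {M : MorseGauge} {ξ : ℕ → G}
    (hξ0 : ξ 0 = 1) (hξg : IsGeodesicOnN (wordDist S) ξ univ)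
    (hξM : IsMorseOnN (wordDist S) M ξ univ) : 1 ≤ M 3 0 := by
  have hnd := nd_one_ray hgen hξ0 hξg
  -- find a point of word length 1 off the ray
  have hx : ∃ x : G, nd S 1 x ≤ 1 ∧ x ≠ 1 ∧ ∀ j, ξ j ≠ x := by
    have hg1 : nd S 1 (ξ 1) = 1 := hnd 1
    have hgne : ξ 1 ≠ 1 := by
      intro h
      rw [h] at hg1
      rw [nd_self] at hg1
      omega
    by_cases hcase : ∃ j, ξ j = (ξ 1)⁻¹
    · obtain ⟨j0, hj0⟩ := hcase
      have hj0v : nd S 1 (ξ j0) = j0 := hnd j0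
      have hj0le : j0 ≤ 1 := by
        rw [hj0] at hj0v
        have := nd_inv_le_one hgen hg1
        omega
      have hgg : (ξ 1)⁻¹ = ξ 1 := by
        interval_cases j0
        · rw [hξ0] at hj0
          exact absurd (inv_eq_one.mp hj0.symm) hgne
        · exact hj0.symm
      -- use the second step
      have h12 : nd S (ξ 1) (ξ 2) = 1 := by
        have h := hξg 1 trivial 2 trivial
        rw [wordDist_eq_nd hgen] at h
        have : ((nd S (ξ 1) (ξ 2) : ℝ)) = 1 := by rw [h]; norm_num
        exact_mod_cast this
      set h2 := (ξ 1)⁻¹ * ξ 2 with hh2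
      have hh1 : nd S 1 h2 = 1 := by
        have : nd S (ξ 1 * 1) (ξ 1 * h2) = nd S 1 h2 := nd_mul_left _ _ _
        rw [mul_one, hh2, mul_inv_cancel_left] at this
        rw [← this, h12]
      have hh2ne : h2 ≠ 1 := by
        intro h
        rw [h, nd_self] at hh1
        omega
      refine ⟨h2⁻¹, nd_inv_le_one hgen hh1, inv_ne_one.mpr hh2ne, ?_⟩
      intro j hj
      have hjv : nd S 1 (ξ j) = j := hnd j
      have hjle : j ≤ 1 := by
        rw [hj] at hjv
        have := nd_inv_le_one hgen hh1
        omega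
      interval_cases j
      · rw [hξ0] at hj
        exact hh2ne (inv_eq_one.mp hj.symm)
      · -- h2⁻¹ = ξ 1, so ξ 2 = 1 = ξ 0, contradiction with length 2
        have hh2g : h2 = (ξ 1)⁻¹ := by rw [hj, inv_inv]
        have hξ2 : ξ 2 = 1 := by
          have : ξ 1 * h2 = ξ 2 := by rw [hh2]; group
          rw [hh2g, ← hgg] at this
          simpa using this.symm
        have h02 : nd S 1 (ξ 2) = 2 := hnd 2
        rw [hξ2, nd_self] at h02
        omega
    · push_neg at hcase
      exact ⟨(ξ 1)⁻¹, nd_inv_le_one hgen hg1, inv_ne_one.mpr hgne, hcase⟩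
  obtain ⟨x, hxle, hxne1, hxoff⟩ := hx
  -- distances
  have dx1ub : wordDist S 1 x ≤ 1 := by
    rw [wordDist_eq_nd hgen]
    exact_mod_cast hxle
  have dx1lb : 1 ≤ wordDist S 1 x := dW_one_le_of_ne hgen (Ne.symm hxne1)
  have d12 : wordDist S 1 (ξ 2) = 2 := by
    have h := hξg 0 trivial 2 trivial
    rw [hξ0] at h
    rw [h]
    push_cast
    rw [zero_sub, abs_neg]
    exact abs_two
  have dx2lb : 1 ≤ wordDist S x (ξ 2) := dW_one_le_of_ne hgen (fun h => hxoff 2 h.symm)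
  have dx2ub : wordDist S x (ξ 2) ≤ 3 := by
    have h1 : wordDist S x 1 = wordDist S 1 x := dW_symm hgen _ _
    have := dW_triangle hgen x 1 (ξ 2)
    linarith
  -- the test quasi-geodesic
  set η : ℕ → G := fun u => if u = 0 then 1 else if u = 1 then x else ξ 2 with hη
  have hη0 : η 0 = 1 := rfl
  have hη1 : η 1 = x := rfl
  have hη2 : η 2 = ξ 2 := rfl
  have hQG : IsQGOnN (wordDist S) 3 0 η (Icc 0 2) := by
    have hs10 : wordDist S x 1 = wordDist S 1 x := dW_symm hgen _ _
    have hs20 : wordDist S (ξ 2) 1 = wordDist S 1 (ξ 2) := dW_symm hgen _ _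
    have hs21 : wordDist S (ξ 2) x = wordDist S x (ξ 2) := dW_symm hgen _ _
    have hself1 : wordDist S (1:G) 1 = 0 := dW_self hgen 1
    have hselfx : wordDist S x x = 0 := dW_self hgen x
    have hself2 : wordDist S (ξ 2) (ξ 2) = 0 := dW_self hgen (ξ 2)
    intro i hi j hj
    simp only [mem_Icc] at hi hj
    have hi2 := hi.2
    have hj2 := hj.2
    have e00 : |(0:ℝ) - 0| = 0 := by simp
    have e11 : |(1:ℝ) - 1| = 0 := by simp
    have e22 : |(2:ℝ) - 2| = 0 := by simp
    have e01 : |(0:ℝ) - 1| = 1 := by simp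
    have e02 : |(0:ℝ) - 2| = 2 := by rw [zero_sub, abs_neg]; exact abs_two
    have e12 : |(1:ℝ) - 2| = 1 := by rw [show (1:ℝ) - 2 = -1 by norm_num, abs_neg, abs_one]
    have e10 : |(1:ℝ) - 0| = 1 := by simp
    have e20 : |(2:ℝ) - 0| = 2 := by rw [sub_zero]; exact abs_two
    have e21 : |(2:ℝ) - 1| = 1 := by rw [show (2:ℝ) - 1 = 1 by norm_num, abs_one]
    interval_cases i <;> interval_cases j <;>
      simp only [hη0, hη1, hη2] <;>
      push_cast <;>
      constructor <;>
      (first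
        | rw [e00] | rw [e11] | rw [e22] | rw [e01] | rw [e02] | rw [e12]
        | rw [e10] | rw [e20] | rw [e21]) <;>
      linarith
  obtain ⟨j, -, hj⟩ := hξM 3 0 (by norm_num) le_rfl η 0 2 (by norm_num) hQG
    ⟨0, trivial, by rw [hξ0, hη0]⟩ ⟨2, trivial, hη2.symm⟩ 1 (by constructor <;> norm_num)
  have hlb : 1 ≤ wordDist S (η 1) (ξ j) := by
    rw [hη1]
    exact dW_one_le_of_ne hgen (fun h => hxoff j h.symm)
  linarith

end Gauge

end Stmt14Aux
namespace Stmt14Aux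

section Key

variable {G : Type*} [Group G] {S : Set G} (hgen : Subgroup.closure S = ⊤)
include hgen

/-- The central fellow-travelling lemma: if an `M`-Morse geodesic ray `ξ` and a geodesic
(segment or ray) `γ`, both from the identity, are `K`-close at time `m`, then they are
`2·M 3 0`-close at all times `t ≤ m - K`. -/
lemma key_lemma {M : MorseGauge} {ξ γ : ℕ → G}
    (hξ0 : ξ 0 = 1) (hξg : IsGeodesicOnN (wordDist S) ξ univ)
    (hξM : IsMorseOnN (wordDist S) M ξ univ)
    {n' : ℕ} (hγ0 : γ 0 = 1) (hγg : IsGeodesicOnN (wordDist S) γ (Iic n'))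
    {m : ℕ} (hm : m ≤ n') {K : ℝ} (hK : wordDist S (γ m) (ξ m) ≤ K)
    {t : ℕ} (htK : (t : ℝ) ≤ (m : ℝ) - K) :
    wordDist S (γ t) (ξ t) ≤ 2 * M 3 0 := by
  have hK0 : 0 ≤ K := le_trans (dW_nonneg hgen _ _) hK
  have htm : t ≤ m := by
    have : (t : ℝ) ≤ (m : ℝ) := by linarith
    exact_mod_cast this
  -- nearest-point projection of ξ m to γ
  obtain ⟨s, hsmem, hsmin⟩ := Finset.exists_min_image (Finset.Iic n')
    (fun q => nd S (γ q) (ξ m)) ⟨m, Finset.mem_Iic.mpr hm⟩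
  rw [Finset.mem_Iic] at hsmem
  set D := nd S (γ s) (ξ m) with hD
  have hmin : ∀ q, q ≤ n' → (D : ℝ) ≤ wordDist S (γ q) (ξ m) := by
    intro q hq
    rw [wordDist_eq_nd hgen]
    exact_mod_cast hsmin q (Finset.mem_Iic.mpr hq)
  have hDK : (D : ℝ) ≤ K := by
    refine le_trans ?_ hK
    rw [wordDist_eq_nd hgen]
    exact_mod_cast hsmin m (Finset.mem_Iic.mpr hm)
  -- s is at least m - K
  have hd1s : wordDist S (γ 0) (γ s) = (s : ℝ) := by
    have h := hγg 0 (mem_Iic.mpr (Nat.zero_le _)) s (mem_Iic.mpr hsmem)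
    rw [h]
    push_cast
    rw [zero_sub, abs_neg, abs_of_nonneg (Nat.cast_nonneg s)]
  have hd1m : wordDist S (ξ 0) (ξ m) = (m : ℝ) := by
    have h := hξg 0 trivial m trivial
    rw [h]
    push_cast
    rw [zero_sub, abs_neg, abs_of_nonneg (Nat.cast_nonneg m)]
  have hmsD : (m : ℝ) ≤ (s : ℝ) + D := by
    have htr : wordDist S (ξ 0) (ξ m) ≤ wordDist S (ξ 0) (γ s) + wordDist S (γ s) (ξ m) := by
      have h1 : wordDist S (ξ 0) (γ s) = wordDist S (γ 0) (γ s) := by rw [hξ0, hγ0]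
      have := dW_triangle hgen (ξ 0) (γ s) (ξ m)
      linarith [this]
    have hDd : wordDist S (γ s) (ξ m) = (D : ℝ) := by rw [wordDist_eq_nd hgen]
    have h1 : wordDist S (ξ 0) (γ s) = wordDist S (γ 0) (γ s) := by rw [hξ0, hγ0]
    linarith [htr, hd1s, hd1m, hDd, h1]
  have hts : t ≤ s := by
    have : (t : ℝ) ≤ (s : ℝ) := by linarith
    exact_mod_cast this
  -- the connecting geodesic
  obtain ⟨p, hp0, hpD, hpgeo⟩ := exists_geodesic_pathR hgen (γ s) (ξ m)
  -- the test path
  set ζ : ℕ → G := fun u => if u ≤ s then γ u else p (u - s) with hζ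
  have hζeq : ∀ u, u ≤ s → ζ u = γ u := by
    intro u hu
    simp only [hζ, if_pos hu]
  have hζeq2 : ∀ v, 1 ≤ v → ζ (s + v) = p v := by
    intro v hv
    have h1 : ¬ (s + v ≤ s) := by omega
    simp only [hζ, if_neg h1, Nat.add_sub_cancel_left]
  -- one-sided quasi-geodesic bounds
  have main : ∀ i j, i ≤ j → j ≤ s + D →
      ((1:ℝ)/3) * ((j:ℝ) - i) ≤ wordDist S (ζ i) (ζ j) ∧
        wordDist S (ζ i) (ζ j) ≤ (j:ℝ) - i := by
    intro i j hij hj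
    have hijR : (0:ℝ) ≤ (j:ℝ) - i := sub_nonneg.mpr (Nat.cast_le.mpr hij)
    by_cases hjs : j ≤ s
    · have his : i ≤ s := le_trans hij hjs
      rw [hζeq i his, hζeq j hjs]
      have h := hγg i (mem_Iic.mpr (le_trans his hsmem)) j (mem_Iic.mpr (le_trans hjs hsmem))
      have habs : |(i:ℝ) - j| = (j:ℝ) - i := by
        rw [abs_sub_comm, abs_of_nonneg hijR]
      rw [h, habs]
      constructor <;> linarith
    · by_cases his : i ≤ s
      · -- mixed case
        have hv1 : 1 ≤ j - s := by omega
        have hvD : j - s ≤ D := by omega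
        have hjsv : j = s + (j - s) := by omega
        rw [hζeq i his, hjsv, hζeq2 (j - s) hv1]
        have hcast : ((j - s : ℕ) : ℝ) = (j : ℝ) - s := by
          push_cast [Nat.cast_sub (by omega : s ≤ j)]
          ring
        have dγis : wordDist S (γ i) (γ s) = (s:ℝ) - i := by
          have h := hγg i (mem_Iic.mpr (le_trans his hsmem)) s (mem_Iic.mpr hsmem)
          rw [h, abs_sub_comm, abs_of_nonneg (sub_nonneg.mpr (Nat.cast_le.mpr his))]
        have dsp : wordDist S (γ s) (p (j - s)) = (j:ℝ) - s := by
          have h := hpgeo 0 (mem_Iic.mpr (Nat.zero_le _)) (j - s) (mem_Iic.mpr hvD)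
          rw [hp0] at h
          rw [h]
          push_cast
          rw [zero_sub, abs_neg, abs_of_nonneg (by positivity : (0:ℝ) ≤ ((j - s : ℕ):ℝ))]
          rw [hcast]
        have dpm : wordDist S (p (j - s)) (ξ m) = (D:ℝ) - ((j:ℝ) - s) := by
          have h := hpgeo (j - s) (mem_Iic.mpr hvD) D (mem_Iic.mpr le_rfl)
          rw [hpD] at h
          have hc2 : ((j - s : ℕ) : ℝ) = (j:ℝ) - s := by
            rw [Nat.cast_sub (by omega : s ≤ j)]
          rw [h, abs_sub_comm, abs_of_nonneg (sub_nonneg.mpr (Nat.cast_le.mpr hvD)), hc2]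
        have dim : (D:ℝ) ≤ wordDist S (γ i) (ξ m) := hmin i (le_trans his hsmem)
        have tri1 : wordDist S (γ i) (p (j - s)) ≤
            wordDist S (γ i) (γ s) + wordDist S (γ s) (p (j - s)) := dW_triangle hgen _ _ _
        have tri2 : wordDist S (γ i) (ξ m) ≤
            wordDist S (γ i) (p (j - s)) + wordDist S (p (j - s)) (ξ m) := dW_triangle hgen _ _ _
        have tri3 : wordDist S (γ i) (γ s) ≤
            wordDist S (γ i) (p (j - s)) + wordDist S (p (j - s)) (γ s) := dW_triangle hgen _ _ _
        have hsym : wordDist S (p (j - s)) (γ s) = wordDist S (γ s) (p (j - s)) :=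
          dW_symm hgen _ _
        have hjR : ((s + (j - s) : ℕ) : ℝ) = (j : ℝ) := by
          push_cast [Nat.cast_sub (by omega : s ≤ j)]
          ring
        rw [hjR]
        constructor <;> linarith
      · -- both on the connector
        push_neg at his hjs
        have hi' : i = s + (i - s) := by omega
        have hj' : j = s + (j - s) := by omega
        have hiD : i - s ≤ D := by omega
        have hjD : j - s ≤ D := by omega
        rw [hi', hj', hζeq2 (i - s) (by omega), hζeq2 (j - s) (by omega)]
        have h := hpgeo (i - s) (mem_Iic.mpr hiD) (j - s) (mem_Iic.mpr hjD)
        have hiR : ((s + (i - s) : ℕ) : ℝ) = (i : ℝ) := by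
          push_cast [Nat.cast_sub (by omega : s ≤ i)]
          ring
        have hjR : ((s + (j - s) : ℕ) : ℝ) = (j : ℝ) := by
          push_cast [Nat.cast_sub (by omega : s ≤ j)]
          ring
        have habs : |((i - s : ℕ):ℝ) - ((j - s : ℕ):ℝ)| = (j:ℝ) - i := by
          rw [abs_sub_comm, abs_of_nonneg (sub_nonneg.mpr (Nat.cast_le.mpr (by omega : i - s ≤ j - s)))]
          rw [Nat.cast_sub (by omega : s ≤ i), Nat.cast_sub (by omega : s ≤ j)]
          ring
        rw [h, habs, hiR, hjR]
        constructor <;> linarith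
  have hQG : IsQGOnN (wordDist S) 3 0 ζ (Icc 0 (s + D)) := by
    intro i hi j hj
    simp only [mem_Icc] at hi hj
    rcases le_total i j with hij | hij
    · obtain ⟨h1, h2⟩ := main i j hij hj.2
      have habs : |(i:ℝ) - j| = (j:ℝ) - i := by
        rw [abs_sub_comm, abs_of_nonneg (sub_nonneg.mpr (Nat.cast_le.mpr hij))]
      rw [habs]
      constructor <;> linarith
    · obtain ⟨h1, h2⟩ := main j i hij hi.2
      have habs : |(i:ℝ) - j| = (i:ℝ) - j := abs_of_nonneg (sub_nonneg.mpr (Nat.cast_le.mpr hij))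
      have hdsym : wordDist S (ζ i) (ζ j) = wordDist S (ζ j) (ζ i) := dW_symm hgen _ _
      rw [habs, hdsym]
      constructor <;> linarith
  -- endpoints
  have hζ0 : ζ 0 = ξ 0 := by rw [hζeq 0 (Nat.zero_le _), hγ0, hξ0]
  have hζend : ζ (s + D) = ξ m := by
    rcases Nat.eq_zero_or_pos D with h0 | hpos
    · have h1 : ζ (s + D) = γ s := by
        rw [h0, Nat.add_zero]
        exact hζeq s le_rfl
      rw [h1, ← hp0, ← h0, hpD]
    · rw [hζeq2 D hpos, hpD]
  obtain ⟨jj, -, hjj⟩ := hξM 3 0 (by norm_num) le_rfl ζ 0 (s + D) (Nat.zero_le _) hQG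
    ⟨0, trivial, hζ0.symm⟩ ⟨m, trivial, hζend.symm⟩ t
    ⟨Nat.zero_le _, le_trans hts (Nat.le_add_right _ _)⟩
  rw [hζeq t hts] at hjj
  -- compare parameters
  have hd1t : wordDist S (γ 0) (γ t) = (t : ℝ) := by
    have h := hγg 0 (mem_Iic.mpr (Nat.zero_le _)) t (mem_Iic.mpr (le_trans hts hsmem))
    rw [h]
    push_cast
    rw [zero_sub, abs_neg, abs_of_nonneg (Nat.cast_nonneg t)]
  have hd1j : wordDist S (ξ 0) (ξ jj) = (jj : ℝ) := by
    have h := hξg 0 trivial jj trivial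
    rw [h]
    push_cast
    rw [zero_sub, abs_neg, abs_of_nonneg (Nat.cast_nonneg jj)]
  have heq0 : wordDist S (ξ 0) (γ t) = wordDist S (γ 0) (γ t) := by rw [hξ0, hγ0]
  have heq0' : wordDist S (γ 0) (ξ jj) = wordDist S (ξ 0) (ξ jj) := by rw [hξ0, hγ0]
  have tri1 : wordDist S (ξ 0) (ξ jj) ≤ wordDist S (ξ 0) (γ t) + wordDist S (γ t) (ξ jj) :=
    dW_triangle hgen _ _ _
  have tri2 : wordDist S (γ 0) (γ t) ≤ wordDist S (γ 0) (ξ jj) + wordDist S (ξ jj) (γ t) :=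
    dW_triangle hgen _ _ _
  have hsym2 : wordDist S (ξ jj) (γ t) = wordDist S (γ t) (ξ jj) := dW_symm hgen _ _
  have hdjt : wordDist S (ξ jj) (ξ t) = |(jj:ℝ) - t| := hξg jj trivial t trivial
  have habs : |(jj:ℝ) - t| ≤ M 3 0 := by
    rw [abs_le]
    constructor <;> linarith
  have trif : wordDist S (γ t) (ξ t) ≤ wordDist S (γ t) (ξ jj) + wordDist S (ξ jj) (ξ t) :=
    dW_triangle hgen _ _ _
  linarith [trif, hjj, hdjt, habs]

end Key

end Stmt14Aux
namespace Stmt14Aux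

section Boundary

variable {G : Type*} [Group G] {S : Set G} (hgen : Subgroup.closure S = ⊤)
include hgen

lemma rel_of_quot_eq {γ ξ : MRayN (wordDist S) (1 : G)}
    (h : (Quot.mk _ γ : MorseBoundaryN (wordDist S) (1 : G)) = Quot.mk _ ξ) :
    ∃ C, ∀ i, wordDist S (γ.1 i) (ξ.1 i) ≤ C := by
  have he := Quot.eqvGen_exact h
  clear h
  induction he with
  | rel a b hab => exact hab
  | refl a => exact ⟨0, fun i => le_of_eq (dW_self hgen _)⟩
  | symm a b _ ih =>
      obtain ⟨C, hC⟩ := ih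
      exact ⟨C, fun i => le_trans (le_of_eq (dW_symm hgen _ _)) (hC i)⟩
  | trans a b c _ _ ih1 ih2 =>
      obtain ⟨C1, h1⟩ := ih1
      obtain ⟨C2, h2⟩ := ih2
      exact ⟨C1 + C2, fun i =>
        le_trans (dW_triangle hgen _ _ _) (add_le_add (h1 i) (h2 i))⟩

lemma ray_two_close {M : MorseGauge} {γ ξ : MRayN (wordDist S) (1 : G)}
    (hγM : IsMorseOnN (wordDist S) M γ.1 univ)
    (hξM : IsMorseOnN (wordDist S) M ξ.1 univ)
    (h : (Quot.mk _ γ : MorseBoundaryN (wordDist S) (1 : G)) = Quot.mk _ ξ)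
    (t : ℕ) : wordDist S (γ.1 t) (ξ.1 t) ≤ 2 * M 3 0 := by
  obtain ⟨C, hC⟩ := rel_of_quot_eq hgen h
  have hC0 : 0 ≤ C := le_trans (dW_nonneg hgen _ _) (hC 0)
  have hγg : IsGeodesicOnN (wordDist S) γ.1 (Iic (t + ⌈C⌉₊)) :=
    fun i _ j _ => γ.2.2.1 i trivial j trivial
  exact key_lemma hgen ξ.2.1 ξ.2.2.1 hξM γ.2.1 hγg le_rfl (hC (t + ⌈C⌉₊))
    (by
      have h1 : C ≤ (⌈C⌉₊ : ℝ) := Nat.le_ceil C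
      push_cast
      linarith)

lemma deltaM_big {M : MorseGauge} {ξ : MRayN (wordDist S) (1 : G)}
    (hξM : IsMorseOnN (wordDist S) M ξ.1 univ) :
    1 ≤ M 3 0 ∧ 8 * M 3 0 ≤ deltaM M ∧ 0 ≤ deltaM M := by
  have h1 : 1 ≤ M 3 0 := gauge_ge_one hgen ξ.2.1 ξ.2.2.1 hξM
  have h2 : 8 * M 3 0 ≤ deltaM M := le_max_right _ _
  exact ⟨h1, h2, by linarith⟩

/-- `z ∈ U_{M,k}(z)` for every `M`-Morse direction `z`. -/
lemma self_mem_UN {M : MorseGauge} {z : MorseBoundaryN (wordDist S) (1 : G)}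
    (hz : MorseDirN (wordDist S) 1 M z) (k : ℕ) : z ∈ UN (wordDist S) 1 M k z := by
  obtain ⟨γ, hγM, hγq⟩ := hz
  refine ⟨γ, hγq, hγM, ?_⟩
  intro ξ hξM hξq t _
  obtain ⟨h1, h2, _⟩ := deltaM_big hgen hγM
  have := ray_two_close hgen hγM hξM (hγq.trans hξq.symm) t
  linarith

omit hgen in
lemma UN_anti {M : MorseGauge} {z : MorseBoundaryN (wordDist S) (1 : G)}
    {k k' : ℕ} (hk : k ≤ k') : UN (wordDist S) 1 M k' z ⊆ UN (wordDist S) 1 M k z := by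
  rintro w ⟨η, h1, h2, h3⟩
  exact ⟨η, h1, h2, fun ξ a b t ht => h3 ξ a b t (ht.trans hk)⟩

omit hgen in
lemma filled_anti {M : MorseGauge} {z : MorseBoundaryN (wordDist S) (1 : G)}
    {k k' : ℕ} (hk : k ≤ k') {x : G} (h : InFilledPtN (wordDist S) 1 M k' z x) :
    InFilledPtN (wordDist S) 1 M k z x := by
  obtain ⟨n, γ, hn, h0, hx, hg, hM, hc⟩ := h
  exact ⟨n, γ, hk.trans hn, h0, hx, hg, hM, fun ξ a b t ht => hc ξ a b t (ht.trans hk)⟩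

/-- The uniform nesting property. -/
lemma nesting {M : MorseGauge} (i : ℕ) {z w : MorseBoundaryN (wordDist S) (1 : G)}
    (hw : w ∈ UN (wordDist S) 1 M (i + ⌈deltaM M⌉₊ + 1) z) :
    (∀ v ∈ UN (wordDist S) 1 M (i + ⌈deltaM M⌉₊ + 1) w, v ∈ UN (wordDist S) 1 M i z) ∧
    (∀ x, InFilledPtN (wordDist S) 1 M (i + ⌈deltaM M⌉₊ + 1) w x →
      InFilledPtN (wordDist S) 1 M i z x) := by
  set J := i + ⌈deltaM M⌉₊ + 1 with hJ
  obtain ⟨ηb, hbq, hbM, hb⟩ := hw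
  obtain ⟨hM1, hM8, hδ0⟩ := deltaM_big hgen hbM
  have hiJ : ∀ t : ℕ, t ≤ i → (t : ℝ) ≤ (J : ℝ) - deltaM M := by
    intro t ht
    have h1 : deltaM M ≤ (⌈deltaM M⌉₊ : ℝ) := Nat.le_ceil _
    have h2 : (t : ℝ) ≤ (i : ℝ) := Nat.cast_le.mpr ht
    rw [hJ]
    push_cast
    linarith
  constructor
  · rintro v ⟨ηv, hvq, hvM, hv⟩
    refine ⟨ηv, hvq, hvM, ?_⟩
    intro ξ hξM hξq t ht
    have hgeo : IsGeodesicOnN (wordDist S) ηv.1 (Iic J) :=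
      fun a _ b _ => ηv.2.2.1 a trivial b trivial
    have hgeo2 : IsGeodesicOnN (wordDist S) ηb.1 (Iic J) :=
      fun a _ b _ => ηb.2.2.1 a trivial b trivial
    have h1 : wordDist S (ηv.1 t) (ηb.1 t) ≤ 2 * M 3 0 :=
      key_lemma hgen ηb.2.1 ηb.2.2.1 hbM ηv.2.1 hgeo le_rfl
        (le_of_lt (hv ηb hbM hbq J le_rfl)) (hiJ t ht)
    have h2 : wordDist S (ηb.1 t) (ξ.1 t) ≤ 2 * M 3 0 :=
      key_lemma hgen ξ.2.1 ξ.2.2.1 hξM ηb.2.1 hgeo2 le_rfl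
        (le_of_lt (hb ξ hξM hξq J le_rfl)) (hiJ t ht)
    have htr := dW_triangle hgen (ηv.1 t) (ηb.1 t) (ξ.1 t)
    have h8 : 8 * M 3 0 ≤ deltaM M := hM8
    linarith
  · rintro x ⟨n, γ, hn, h0, hx, hg, hMg, hc⟩
    refine ⟨n, γ, le_trans (by omega) hn, h0, hx, hg, hMg, ?_⟩
    intro ξ hξM hξq t ht
    have hJn : J ≤ n := hn
    have h1 : wordDist S (γ t) (ηb.1 t) ≤ 2 * M 3 0 :=
      key_lemma hgen ηb.2.1 ηb.2.2.1 hbM h0 hg hJn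
        (le_of_lt (hc ηb hbM hbq J le_rfl)) (hiJ t ht)
    have hgeo2 : IsGeodesicOnN (wordDist S) ηb.1 (Iic J) :=
      fun a _ b _ => ηb.2.2.1 a trivial b trivial
    have h2 : wordDist S (ηb.1 t) (ξ.1 t) ≤ 2 * M 3 0 :=
      key_lemma hgen ξ.2.1 ξ.2.2.1 hξM ηb.2.1 hgeo2 le_rfl
        (le_of_lt (hb ξ hξM hξq J le_rfl)) (hiJ t ht)
    have htr := dW_triangle hgen (γ t) (ηb.1 t) (ξ.1 t)
    linarith

end Boundary

end Stmt14Aux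
namespace Stmt14Aux

section SumLevel

variable {A B : Type*} [Group A] [Group B] {SA : Set A} {SB : Set B}
  {M : MorseGauge}

lemma USumMem_self (hA : Subgroup.closure SA = ⊤) (hB : Subgroup.closure SB = ⊤)
    {z : MorseBoundaryN (wordDist SA) (1 : A) ⊕ MorseBoundaryN (wordDist SB) (1 : B)}
    (hz : MorseDirSum (wordDist SA) (wordDist SB) M z) (k : ℕ) :
    USumMem (wordDist SA) (wordDist SB) M k z z := by
  cases z with
  | inl z => exact self_mem_UN hA hz k
  | inr z => exact self_mem_UN hB hz k

lemma USumMem_anti {k k' : ℕ} (hk : k ≤ k')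
    {z w : MorseBoundaryN (wordDist SA) (1 : A) ⊕ MorseBoundaryN (wordDist SB) (1 : B)}
    (h : USumMem (wordDist SA) (wordDist SB) M k' z w) :
    USumMem (wordDist SA) (wordDist SB) M k z w := by
  cases z with
  | inl z => cases w with
    | inl w => exact UN_anti hk h
    | inr w => exact h.elim
  | inr z => cases w with
    | inl w => exact h.elim
    | inr w => exact UN_anti hk h

lemma InFilledSum_anti {k k' : ℕ} (hk : k ≤ k')
    {z : MorseBoundaryN (wordDist SA) (1 : A) ⊕ MorseBoundaryN (wordDist SB) (1 : B)}
    {x : A ⊕ B} (h : InFilledSum (wordDist SA) (wordDist SB) M k' z x) :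
    InFilledSum (wordDist SA) (wordDist SB) M k z x := by
  cases z with
  | inl z => cases x with
    | inl x => exact filled_anti hk h
    | inr x => exact h.elim
  | inr z => cases x with
    | inl x => exact h.elim
    | inr x => exact filled_anti hk h

lemma nesting_sum (hA : Subgroup.closure SA = ⊤) (hB : Subgroup.closure SB = ⊤) (i : ℕ)
    {z w : MorseBoundaryN (wordDist SA) (1 : A) ⊕ MorseBoundaryN (wordDist SB) (1 : B)}
    (hw : USumMem (wordDist SA) (wordDist SB) M (i + ⌈deltaM M⌉₊ + 1) z w) :
    (∀ v, USumMem (wordDist SA) (wordDist SB) M (i + ⌈deltaM M⌉₊ + 1) w v →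
      USumMem (wordDist SA) (wordDist SB) M i z v) ∧
    (∀ x, InFilledSum (wordDist SA) (wordDist SB) M (i + ⌈deltaM M⌉₊ + 1) w x →
      InFilledSum (wordDist SA) (wordDist SB) M i z x) := by
  cases z with
  | inl z =>
    cases w with
    | inl w =>
      obtain ⟨hU, hF⟩ := nesting hA i hw
      constructor
      · rintro (v | v) hv
        · exact hU v hv
        · exact hv.elim
      · rintro (x | x) hx
        · exact hF x hx
        · exact hx.elim
    | inr w => exact hw.elim
  | inr z =>
    cases w with
    | inl w => exact hw.elim
    | inr w =>
      obtain ⟨hU, hF⟩ := nesting hB i hw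
      constructor
      · rintro (v | v) hv
        · exact hv.elim
        · exact hU v hv
      · rintro (x | x) hx
        · exact hx.elim
        · exact hF x hx

end SumLevel

end Stmt14Aux

open Stmt14Aux in
/-- the family `{V^M_k(a)}_k` is a fundamental system of neighbourhoods on
the combinatorial `M`-Morse boundary: (1) `a ∈ V^M_k(a)`; (2) the family is directed;
(3) it satisfies the neighbourhood filter axiom. -/
theorem stmt14 (A B : Type) [Group A] [Group B] (SA : Set A) (SB : Set B)
    (hSAfin : SA.Finite) (hSBfin : SB.Finite)
    (hSAgen : Subgroup.closure SA = ⊤) (hSBgen : Subgroup.closure SB = ⊤)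
    (M : MorseGauge) (a : CombBoundaryM (wordDist SA) (wordDist SB) M) :
    (∀ k, a ∈ VM k a) ∧
    (∀ i j, ∃ k, VM k a ⊆ VM i a ∩ VM j a) ∧
    (∀ i, ∃ j, ∀ b ∈ VM j a, ∃ k, VM k b ⊆ VM i a) := by
  cases a with
  | inl c =>
    refine ⟨?_, ?_, ?_⟩
    · intro k
      exact ⟨le_top, fun i _ => rfl⟩
    · intro i j
      refine ⟨max i j, fun b hb => ?_⟩
      have h1 : ((max i j : ℕ) : ℕ∞) ≤ lenOf b := hb.1
      have h2 : ∀ i' < max i j, sylOf b i' = some (c.u i') := hb.2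
      constructor
      · exact ⟨le_trans (ENat.coe_le_coe.mpr (le_max_left i j)) h1,
          fun i' hi' => h2 i' (lt_of_lt_of_le hi' (le_max_left i j))⟩
      · exact ⟨le_trans (ENat.coe_le_coe.mpr (le_max_right i j)) h1,
          fun i' hi' => h2 i' (lt_of_lt_of_le hi' (le_max_right i j))⟩
    · intro i
      refine ⟨i, fun b hb => ⟨i, fun e he => ?_⟩⟩
      cases b with
      | inl cb =>
        have hb2 : ∀ i' < i, sylOf (Sum.inl cb : CombBoundaryM (wordDist SA) (wordDist SB) M) i'
            = some (c.u i') := hb.2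
        have he1 : ((i : ℕ) : ℕ∞) ≤ lenOf e := he.1
        have he2 : ∀ i' < i, sylOf e i' = some (cb.u i') := he.2
        exact ⟨he1, fun i' hi' => (he2 i' hi').trans (hb2 i' hi')⟩
      | inr cb =>
        have hb1 : ((i : ℕ) : ℕ∞) ≤ (cb.l.length : ℕ∞) := hb.1
        have hb2 : ∀ i' < i, sylOf (Sum.inr cb : CombBoundaryM (wordDist SA) (wordDist SB) M) i'
            = some (c.u i') := hb.2
        have he1 : ((cb.l.length : ℕ) : ℕ∞) ≤ lenOf e := he.1
        have he2 : ∀ i' < cb.l.length, sylOf e i' = cb.l[i']? := he.2.1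
        exact ⟨le_trans hb1 he1, fun i' hi' =>
          ((he2 i' (lt_of_lt_of_le hi' (ENat.coe_le_coe.mp hb1))).trans
            (hb2 i' hi'))⟩
  | inr c =>
    have hz : MorseDirSum (wordDist SA) (wordDist SB) M c.z := c.morse.2
    refine ⟨?_, ?_, ?_⟩
    · intro k
      refine ⟨le_rfl, fun i _ => rfl, fun h => absurd h (lt_irrefl _),
        fun _ => ⟨c.z, rfl, USumMem_self hSAgen hSBgen hz k⟩⟩
    · intro i j
      refine ⟨max i j, fun b hb => ?_⟩
      obtain ⟨h1, h2, h3, h4⟩ := hb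
      constructor
      · refine ⟨h1, h2, fun hlt => ?_, fun heq => ?_⟩
        · obtain ⟨x, hx1, hx2⟩ := h3 hlt
          exact ⟨x, hx1, InFilledSum_anti (le_max_left i j) hx2⟩
        · obtain ⟨zb, hz1, hz2⟩ := h4 heq
          exact ⟨zb, hz1, USumMem_anti (le_max_left i j) hz2⟩
      · refine ⟨h1, h2, fun hlt => ?_, fun heq => ?_⟩
        · obtain ⟨x, hx1, hx2⟩ := h3 hlt
          exact ⟨x, hx1, InFilledSum_anti (le_max_right i j) hx2⟩
        · obtain ⟨zb, hz1, hz2⟩ := h4 heq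
          exact ⟨zb, hz1, USumMem_anti (le_max_right i j) hz2⟩
    · intro i
      set J := i + ⌈deltaM M⌉₊ + 1 with hJdef
      have hiJ : i ≤ J := by omega
      refine ⟨J, fun b hb => ?_⟩
      cases b with
      | inl cb =>
        have hb2 : ∀ i' < c.l.length,
            sylOf (Sum.inl cb : CombBoundaryM (wordDist SA) (wordDist SB) M) i'
              = c.l[i']? := hb.2.1
        have hb3 := hb.2.2.1
        obtain ⟨x, hx1, hx2⟩ := hb3 (ENat.coe_lt_top _)
        refine ⟨c.l.length + 1, fun e he => ?_⟩
        cases e with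
        | inl ce =>
          have he2 : ∀ i' < c.l.length + 1, sylOf
              (Sum.inl ce : CombBoundaryM (wordDist SA) (wordDist SB) M) i'
                = some (cb.u i') := he.2
          refine ⟨le_top, fun i' hi' => (he2 i' (by omega)).trans (hb2 i' hi'),
            fun _ => ⟨ce.u c.l.length, rfl, ?_⟩,
            fun h => absurd h (by simp [lenOf])⟩
          have hxe : ce.u c.l.length = x := by
            have h1 := (he2 c.l.length (by omega)).trans hx1
            exact Option.some.inj h1
          rw [hxe]
          exact InFilledSum_anti hiJ hx2
        | inr ce =>
          have he1 : ((c.l.length + 1 : ℕ) : ℕ∞) ≤ (ce.l.length : ℕ∞) := he.1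
          have he2 : ∀ i' < c.l.length + 1, sylOf
              (Sum.inr ce : CombBoundaryM (wordDist SA) (wordDist SB) M) i'
                = some (cb.u i') := he.2
          have hlen : c.l.length + 1 ≤ ce.l.length := ENat.coe_le_coe.mp he1
          refine ⟨ENat.coe_le_coe.mpr (by omega), fun i' hi' =>
            (he2 i' (by omega)).trans (hb2 i' hi'), fun _ => ?_, fun h => ?_⟩
          · exact ⟨x, (he2 c.l.length (by omega)).trans hx1, InFilledSum_anti hiJ hx2⟩
          · exfalso
            have h' : (ce.l.length : ℕ∞) = (c.l.length : ℕ∞) := h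
            have := ENat.coe_le_coe.mp (le_of_eq h')
            omega
      | inr cb =>
        have hb1 : ((c.l.length : ℕ) : ℕ∞) ≤ (cb.l.length : ℕ∞) := hb.1
        have hb2 : ∀ i' < c.l.length,
            sylOf (Sum.inr cb : CombBoundaryM (wordDist SA) (wordDist SB) M) i'
              = c.l[i']? := hb.2.1
        have hb3 := hb.2.2.1
        have hb4 := hb.2.2.2
        have hlen0 : c.l.length ≤ cb.l.length := ENat.coe_le_coe.mp hb1
        by_cases hlen : cb.l.length = c.l.length
        · -- equal length: use the nesting property
          have hlists : cb.l = c.l := by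
            refine List.ext_getElem? (fun n => ?_)
            by_cases hn : n < c.l.length
            · exact hb2 n hn
            · rw [List.getElem?_eq_none_iff.mpr (by omega), List.getElem?_eq_none_iff.mpr (by omega)]
          have hlenE : ((cb.l.length : ℕ) : ℕ∞) = ((c.l.length : ℕ) : ℕ∞) := by
            exact_mod_cast hlen
          obtain ⟨zb, hzb, hU⟩ := hb4 hlenE
          have hzbz : zb = cb.z := (Option.some.inj hzb).symm
          subst hzbz
          obtain ⟨hUU, hFF⟩ := nesting_sum hSAgen hSBgen i hU
          refine ⟨J, fun e he => ?_⟩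
          have he1 : ((cb.l.length : ℕ) : ℕ∞) ≤ lenOf e := he.1
          have he2 : ∀ i' < cb.l.length, sylOf e i' = cb.l[i']? := he.2.1
          have he3 := he.2.2.1
          have he4 := he.2.2.2
          have hcast : ((c.l.length : ℕ) : ℕ∞) = ((cb.l.length : ℕ) : ℕ∞) := by
            exact_mod_cast hlen.symm
          refine ⟨hcast ▸ he1, fun i' hi' => ?_, fun hlt => ?_, fun heq => ?_⟩
          · rw [← hlists]
            exact he2 i' (by omega)
          · obtain ⟨x, hx1, hx2⟩ := he3 (hcast ▸ hlt)
            refine ⟨x, ?_, hFF x hx2⟩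
            rw [← hlen]
            exact hx1
          · obtain ⟨ze, hz1, hz2⟩ := he4 (heq.trans hcast)
            exact ⟨ze, hz1, hUU ze hz2⟩
        · -- strictly longer
          have hlonger : c.l.length < cb.l.length := by omega
          obtain ⟨x, hx1, hx2⟩ := hb3 (ENat.coe_lt_coe.mpr hlonger)
          refine ⟨0, fun e he => ?_⟩
          have he1 : ((cb.l.length : ℕ) : ℕ∞) ≤ lenOf e := he.1
          have he2 : ∀ i' < cb.l.length, sylOf e i' = cb.l[i']? := he.2.1
          refine ⟨le_trans (ENat.coe_le_coe.mpr hlen0) he1, fun i' hi' =>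
            (he2 i' (by omega)).trans (hb2 i' hi'), fun _ =>
            ⟨x, (he2 c.l.length hlonger).trans hx1, InFilledSum_anti hiJ hx2⟩,
            fun heq => ?_⟩
          exfalso
          have := ENat.coe_le_coe.mp (le_trans he1 (le_of_eq heq))
          omega

end Statement14
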